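/- For every linear functional ψ : H → k and every y ∈ H one has Σ ψ(h₍₁₎)·φ(h₍₂₎·y) = n·ψ(S(y)). (This is the identity F∘F = S for the Fourier transform on the dual Hopf algebra H*: the Fourier transform of H applied to Σ ψ(h₍₁₎)·h₍₂₎ returns ψ∘S.) -/

import Mathlib

open TensorProduct Coalgebra HopfAlgebra

lemma integral_comul_mul_tmul {k : Type*} [Field k] {H : Type*} [Ring H] [HopfAlgebra k H]
    (h : H) (hInt' : ∀ x : H, h * x = counit (R := k) x • h) (z : H) :
    comul (R := k) h * (z ⊗ₜ[k] (1 : H)) =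
      comul (R := k) h * ((1 : H) ⊗ₜ[k] antipode (R := k) z) := by
  set C := comul (R := k) h with hC
  let T : H ⊗[k] (H ⊗[k] H) →ₗ[k] H ⊗[k] H :=
    LinearMap.mulLeft k C ∘ₗ
      LinearMap.lTensor H (LinearMap.mul' k H ∘ₗ LinearMap.lTensor H (antipode (R := k)))
  have hT : ∀ u v w : H, T (u ⊗ₜ (v ⊗ₜ w)) = C * (u ⊗ₜ (v * antipode (R := k) w)) := by
    intro u v w; simp [T]
  set rz := ℛ k z with hrz
  set rL : (i : H × H) → Coalgebra.Repr k (rz.left i) (H × H) := fun i => ℛ k (rz.left i) with hrL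
  set rR : (i : H × H) → Coalgebra.Repr k (rz.right i) (H × H) := fun i => ℛ k (rz.right i) with hrR
  have coas := Coalgebra.sum_tmul_tmul_eq rz rL rR
  have coasT := congrArg T coas
  simp only [map_sum, hT] at coasT
  have hzl : ∑ i ∈ rz.index, counit (R := k) (rz.left i) • rz.right i = z := by
    calc ∑ i ∈ rz.index, counit (R := k) (rz.left i) • rz.right i
        = TensorProduct.lid k H
            (∑ i ∈ rz.index, counit (R := k) (rz.left i) ⊗ₜ[k] rz.right i) := by
          rw [map_sum]; simp only [TensorProduct.lid_tmul]
      _ = z := by rw [Coalgebra.sum_counit_tmul_eq rz]; simp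
  have hzr : ∑ i ∈ rz.index, counit (R := k) (rz.right i) • rz.left i = z := by
    calc ∑ i ∈ rz.index, counit (R := k) (rz.right i) • rz.left i
        = TensorProduct.rid k H
            (∑ i ∈ rz.index, rz.left i ⊗ₜ[k] counit (R := k) (rz.right i)) := by
          rw [map_sum]; simp only [TensorProduct.rid_tmul]
      _ = z := by rw [Coalgebra.sum_tmul_counit_eq rz]; simp
  have hL : ∑ i ∈ rz.index, ∑ j ∈ (rL i).index,
      C * ((rL i).left j ⊗ₜ[k] ((rL i).right j * antipode (R := k) (rz.right i)))
      = C * ((1 : H) ⊗ₜ[k] antipode (R := k) z) := by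
    have inner : ∀ i ∈ rz.index, ∑ j ∈ (rL i).index,
        C * ((rL i).left j ⊗ₜ[k] ((rL i).right j * antipode (R := k) (rz.right i)))
        = counit (R := k) (rz.left i) •
            (C * ((1 : H) ⊗ₜ[k] antipode (R := k) (rz.right i))) := by
      intro i _
      have step : ∑ j ∈ (rL i).index,
          C * ((rL i).left j ⊗ₜ[k] ((rL i).right j * antipode (R := k) (rz.right i)))
          = C * ((∑ j ∈ (rL i).index, (rL i).left j ⊗ₜ[k] (rL i).right j) *
              ((1 : H) ⊗ₜ[k] antipode (R := k) (rz.right i))) := by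
        rw [Finset.sum_mul, Finset.mul_sum]
        refine Finset.sum_congr rfl fun j _ => ?_
        rw [Algebra.TensorProduct.tmul_mul_tmul, mul_one]
      rw [step, (rL i).eq, ← mul_assoc]
      rw [show C * CoalgebraStruct.comul (rz.left i)
            = comul (R := k) (h * rz.left i) from (Bialgebra.comul_mul _ _).symm]
      rw [hInt', map_smul, smul_mul_assoc]
    rw [Finset.sum_congr rfl inner]
    have collect : ∑ x ∈ rz.index,
        counit (R := k) (rz.left x) • (C * ((1 : H) ⊗ₜ[k] antipode (R := k) (rz.right x)))
        = C * ((1 : H) ⊗ₜ[k] antipode (R := k)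
            (∑ x ∈ rz.index, counit (R := k) (rz.left x) • rz.right x)) := by
      rw [map_sum, TensorProduct.tmul_sum, Finset.mul_sum]
      refine Finset.sum_congr rfl fun x _ => ?_
      rw [map_smul, tmul_smul, mul_smul_comm]
    rw [collect, hzl]
  have hR : ∑ i ∈ rz.index, ∑ j ∈ (rR i).index,
      C * (rz.left i ⊗ₜ[k] ((rR i).left j * antipode (R := k) ((rR i).right j)))
      = C * (z ⊗ₜ[k] (1 : H)) := by
    have inner : ∀ i ∈ rz.index, ∑ j ∈ (rR i).index,
        C * (rz.left i ⊗ₜ[k] ((rR i).left j * antipode (R := k) ((rR i).right j)))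
        = counit (R := k) (rz.right i) • (C * (rz.left i ⊗ₜ[k] (1 : H))) := by
      intro i _
      rw [← Finset.mul_sum, ← TensorProduct.tmul_sum,
        HopfAlgebra.sum_mul_antipode_eq_smul (rR i)]
      rw [tmul_smul, mul_smul_comm]
    rw [Finset.sum_congr rfl inner]
    have collect : ∑ x ∈ rz.index,
        counit (R := k) (rz.right x) • (C * (rz.left x ⊗ₜ[k] (1 : H)))
        = C * ((∑ x ∈ rz.index, counit (R := k) (rz.right x) • rz.left x) ⊗ₜ[k] (1 : H)) := by
      rw [TensorProduct.sum_tmul, Finset.mul_sum]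
      refine Finset.sum_congr rfl fun x _ => ?_
      rw [← smul_tmul', mul_smul_comm]
    rw [collect, hzr]
  rw [hL, hR] at coasT
  exact coasT.symm

theorem dual_fourier_squared_eq_antipode
    {k : Type*} [Field k] {H : Type*} [Ring H] [HopfAlgebra k H]
    [FiniteDimensional k H]
    (n : k) (hn : n = (Module.finrank k H : k)) (hn0 : n ≠ 0)
    (h : H)
    (hInt : ∀ x : H, x * h = counit (R := k) x • h)
    (hInt' : ∀ x : H, h * x = counit (R := k) x • h)
    (hεh : counit (R := k) h = n)
    (φ : H →ₗ[k] k)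
    (hφInt : ∀ x : H, TensorProduct.lid k H (LinearMap.rTensor H φ (comul x)) = φ x • 1)
    (hφInt' : ∀ x : H, TensorProduct.rid k H (LinearMap.lTensor H φ (comul x)) = φ x • 1)
    (hφ1 : φ 1 = n)
    (hSS : ∀ x : H, antipode (R := k) (antipode (R := k) x) = x)
    (hSh : antipode (R := k) h = h)
    (hφS : ∀ x : H, φ (antipode (R := k) x) = φ x)
    (hφh : φ h = n)
    (hφtr : ∀ x y : H, φ (x * y) = φ (y * x))
    :
    ∀ (ψ : Module.Dual k H) (y : H),
      TensorProduct.lid k k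
        (TensorProduct.map ψ (φ ∘ₗ LinearMap.mulRight k y) (comul h))
        = n * ψ (antipode (R := k) y) := by
  intro ψ y
  have e1 : comul (R := k) h * (antipode (R := k) y ⊗ₜ[k] (1 : H))
      = comul (R := k) h * ((1 : H) ⊗ₜ[k] y) := by
    simpa [hSS y] using integral_comul_mul_tmul h hInt' (antipode (R := k) y)
  have mulr : ∀ u : H ⊗[k] H,
      LinearMap.lTensor H (LinearMap.mulRight k y) u = u * ((1 : H) ⊗ₜ[k] y) := by
    intro u
    induction u using TensorProduct.induction_on with
    | zero => simp
    | tmul a b => simp [Algebra.TensorProduct.tmul_mul_tmul]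
    | add a b ha hb => simp [add_mul, ha, hb]
  have mulr' : ∀ u : H ⊗[k] H,
      LinearMap.rTensor H (LinearMap.mulRight k (antipode (R := k) y)) u
        = u * ((antipode (R := k) y) ⊗ₜ[k] (1 : H)) := by
    intro u
    induction u using TensorProduct.induction_on with
    | zero => simp
    | tmul a b => simp [Algebra.TensorProduct.tmul_mul_tmul]
    | add a b ha hb => simp [add_mul, ha, hb]
  have step0 : ∀ (m : H →ₗ[k] H) (u : H ⊗[k] H),
      TensorProduct.map ψ (φ ∘ₗ m) u
        = TensorProduct.map ψ φ (LinearMap.lTensor H m u) := by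
    intro m u
    induction u using TensorProduct.induction_on with
    | zero => simp
    | tmul a b => simp
    | add a b ha hb => simp only [map_add, ha, hb]
  have step1 : ∀ (m : H →ₗ[k] H) (u : H ⊗[k] H),
      TensorProduct.map (ψ ∘ₗ m) φ u
        = TensorProduct.map ψ φ (LinearMap.rTensor H m u) := by
    intro m u
    induction u using TensorProduct.induction_on with
    | zero => simp
    | tmul a b => simp
    | add a b ha hb => simp only [map_add, ha, hb]
  have pair : ∀ (ψ' : Module.Dual k H) (u : H ⊗[k] H),
      TensorProduct.lid k k (TensorProduct.map ψ' φ u)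
        = ψ' (TensorProduct.rid k H (LinearMap.lTensor H φ u)) := by
    intro ψ' u
    induction u using TensorProduct.induction_on with
    | zero => simp
    | tmul a b => simp [mul_comm]
    | add a b ha hb => simp [ha, hb]
  calc TensorProduct.lid k k
        (TensorProduct.map ψ (φ ∘ₗ LinearMap.mulRight k y) (comul h))
      = TensorProduct.lid k k
        (TensorProduct.map ψ φ (comul (R := k) h * ((1 : H) ⊗ₜ[k] y))) := by
        rw [step0, mulr]
    _ = TensorProduct.lid k k
        (TensorProduct.map ψ φ (comul (R := k) h * (antipode (R := k) y ⊗ₜ[k] (1 : H)))) := by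
        rw [e1]
    _ = TensorProduct.lid k k
        (TensorProduct.map (ψ ∘ₗ LinearMap.mulRight k (antipode (R := k) y)) φ (comul h)) := by
        rw [step1, mulr']
    _ = (ψ ∘ₗ LinearMap.mulRight k (antipode (R := k) y))
          (TensorProduct.rid k H (LinearMap.lTensor H φ (comul h))) := pair _ _
    _ = n * ψ (antipode (R := k) y) := by
        rw [hφInt' h, hφh]
        simp [smul_eq_mul]
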